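/- If (Ω, 𝒜, μ) is an atom-free σ-finite measure space, then for every A ∈ 𝒜 and every t ∈ [0, μ(A)] there exists B ∈ 𝒜 with B ⊆ A and μ(B) = t. -/

import Mathlib

open MeasureTheory Set Filter
open scoped ENNReal Topology

/-- A measure is atom-free if no measurable set `A` with `μ A > 0` is an atom, i.e.
every such `A` has a measurable subset `B` with `μ B > 0` and `μ (A \ B) > 0`. -/
def AtomFree {Ω : Type*} [MeasurableSpace Ω] (μ : Measure Ω) : Prop :=
  ∀ A : Set Ω, MeasurableSet A → 0 < μ A →
    ∃ B : Set Ω, MeasurableSet B ∧ B ⊆ A ∧ 0 < μ B ∧ 0 < μ (A \ B)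

lemma AtomFree.half {Ω : Type*} [MeasurableSpace Ω] {μ : Measure Ω} (hμ : AtomFree μ)
    {A : Set Ω} (hA : MeasurableSet A) (h0 : 0 < μ A) :
    ∃ B, MeasurableSet B ∧ B ⊆ A ∧ 0 < μ B ∧ μ B ≤ μ A / 2 := by
  obtain ⟨B, hBm, hBA, hB0, hB1⟩ := hμ A hA h0
  rcases le_or_gt (μ B) (μ A / 2) with h | h
  · exact ⟨B, hBm, hBA, hB0, h⟩
  rcases le_or_gt (μ (A \ B)) (μ A / 2) with h' | h'
  · exact ⟨A \ B, hA.diff hBm, diff_subset, hB1, h'⟩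
  exfalso
  have hsum : μ B + μ (A \ B) = μ A := by
    have := measure_inter_add_diff (μ := μ) A hBm
    rwa [inter_eq_right.mpr hBA] at this
  have : μ A < μ A := by
    calc μ A = μ A / 2 + μ A / 2 := (ENNReal.add_halves _).symm
    _ < μ B + μ (A \ B) := ENNReal.add_lt_add h h'
    _ = μ A := hsum
  exact lt_irrefl _ this

lemma AtomFree.small {Ω : Type*} [MeasurableSpace Ω] {μ : Measure Ω} (hμ : AtomFree μ)
    {A : Set Ω} (hA : MeasurableSet A) (h0 : 0 < μ A) (hfin : μ A ≠ ∞)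
    {ε : ℝ≥0∞} (hε : 0 < ε) :
    ∃ B, MeasurableSet B ∧ B ⊆ A ∧ 0 < μ B ∧ μ B < ε := by
  have key : ∀ n : ℕ, ∃ B, MeasurableSet B ∧ B ⊆ A ∧ 0 < μ B ∧ μ B ≤ μ A * 2⁻¹ ^ n := by
    intro n
    induction n with
    | zero => exact ⟨A, hA, subset_rfl, h0, by simp⟩
    | succ n ih =>
      obtain ⟨B, hBm, hBA, hB0, hBle⟩ := ih
      obtain ⟨C, hCm, hCB, hC0, hCle⟩ := hμ.half hBm hB0
      refine ⟨C, hCm, hCB.trans hBA, hC0, ?_⟩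
      calc μ C ≤ μ B / 2 := hCle
      _ ≤ (μ A * 2⁻¹ ^ n) * 2⁻¹ := by
          rw [div_eq_mul_inv]
          exact mul_le_mul_left hBle _
      _ = μ A * 2⁻¹ ^ (n + 1) := by rw [pow_succ, mul_assoc]
  have hto : Tendsto (fun n : ℕ => μ A * 2⁻¹ ^ n) atTop (𝓝 0) := by
    have h1 : Tendsto (fun n : ℕ => (2⁻¹ : ℝ≥0∞) ^ n) atTop (𝓝 0) :=
      ENNReal.tendsto_pow_atTop_nhds_zero_of_lt_one (by
        rw [ENNReal.inv_lt_one]; exact ENNReal.one_lt_two)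
    have := ENNReal.Tendsto.const_mul h1 (Or.inr hfin)
    simpa using this
  obtain ⟨n, hn⟩ := (hto.eventually (gt_mem_nhds hε)).exists
  obtain ⟨B, h1, h2, h3, h4⟩ := key n
  exact ⟨B, h1, h2, h3, lt_of_le_of_lt h4 hn⟩

lemma AtomFree.stmt_fin {Ω : Type*} [MeasurableSpace Ω] {μ : Measure Ω} (hμ : AtomFree μ)
    {A : Set Ω} (hA : MeasurableSet A) (hfin : μ A ≠ ∞) {t : ℝ≥0∞} (ht : t ≤ μ A) :
    ∃ B, MeasurableSet B ∧ B ⊆ A ∧ μ B = t := by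
  have htfin : t ≠ ∞ := ne_top_of_le_ne_top hfin ht
  -- greedy choice: an almost maximal admissible set at each stage
  have key : ∀ S : Set Ω, ∃ C : Set Ω, MeasurableSet C ∧ C ⊆ A \ S ∧ μ C ≤ t - μ S ∧
      ∀ C', MeasurableSet C' → C' ⊆ A \ S → μ C' ≤ t - μ S → μ C' ≤ 2 * μ C := by
    intro S
    set δ : ℝ≥0∞ :=
      ⨆ (C : Set Ω) (_ : MeasurableSet C ∧ C ⊆ A \ S ∧ μ C ≤ t - μ S), μ C with hδ
    have hleδ : ∀ C', MeasurableSet C' → C' ⊆ A \ S → μ C' ≤ t - μ S → μ C' ≤ δ := by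
      intro C' h1 h2 h3
      exact le_iSup₂_of_le C' ⟨h1, h2, h3⟩ le_rfl
    rcases eq_or_lt_of_le (zero_le : (0:ℝ≥0∞) ≤ δ) with hz | hpos
    · refine ⟨∅, MeasurableSet.empty, empty_subset _, by simp, ?_⟩
      intro C' h1 h2 h3
      have := hleδ C' h1 h2 h3
      rw [← hz] at this
      simpa using this
    · have hδt : δ ≤ t := by
        apply iSup₂_le
        rintro C ⟨-, -, h⟩
        exact h.trans tsub_le_self
      have hδtop : δ ≠ ∞ := ne_top_of_le_ne_top htfin hδt
      have hhalf : δ / 2 < δ := ENNReal.half_lt_self hpos.ne' hδtop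
      obtain ⟨C, hC⟩ := lt_iSup_iff.mp hhalf
      obtain ⟨⟨h1, h2, h3⟩, hC⟩ := lt_iSup_iff.mp hC
      refine ⟨C, h1, h2, h3, ?_⟩
      intro C' g1 g2 g3
      calc μ C' ≤ δ := hleδ C' g1 g2 g3
      _ = 2 * (δ / 2) := (ENNReal.mul_div_cancel two_ne_zero ENNReal.ofNat_ne_top).symm
      _ ≤ 2 * μ C := mul_le_mul_right hC.le _
  choose f hf1 hf2 hf3 hf4 using key
  let B : ℕ → Set Ω := fun n => Nat.rec ∅ (fun _ S => S ∪ f S) n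
  have hBs : ∀ n, B (n + 1) = B n ∪ f (B n) := fun _ => rfl
  have hmeas : ∀ n, MeasurableSet (B n) := by
    intro n
    induction n with
    | zero => exact MeasurableSet.empty
    | succ n ih => exact ih.union (hf1 _)
  have hsub : ∀ n, B n ⊆ A := by
    intro n
    induction n with
    | zero => exact empty_subset _
    | succ n ih => exact union_subset ih ((hf2 _).trans diff_subset)
  have hdisj : ∀ n, Disjoint (B n) (f (B n)) := fun n =>
    disjoint_sdiff_right.mono_right (hf2 (B n))
  have hmeasure : ∀ n, μ (B (n + 1)) = μ (B n) + μ (f (B n)) := fun n =>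
    measure_union (hdisj n) (hf1 _)
  have hle : ∀ n, μ (B n) ≤ t := by
    intro n
    induction n with
    | zero => simp [B]
    | succ n ih =>
      rw [hmeasure n]
      calc μ (B n) + μ (f (B n)) ≤ μ (B n) + (t - μ (B n)) := add_le_add le_rfl (hf3 _)
      _ = t := add_tsub_cancel_of_le ih
  have hmono : Monotone B := monotone_nat_of_le_succ fun n => subset_union_left
  set BB := ⋃ n, B n with hBB
  have hBBm : MeasurableSet BB := MeasurableSet.iUnion hmeas
  have hBBA : BB ⊆ A := iUnion_subset hsub
  have hBBle : μ BB ≤ t := by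
    rw [hBB, Directed.measure_iUnion hmono.directed_le]
    exact iSup_le hle
  refine ⟨BB, hBBm, hBBA, ?_⟩
  by_contra hne
  have hlt : μ BB < t := lt_of_le_of_ne hBBle hne
  have hBBfin : μ BB ≠ ∞ := ne_top_of_le_ne_top htfin hBBle
  have hpos : 0 < μ (A \ BB) := by
    rw [measure_diff hBBA hBBm.nullMeasurableSet hBBfin]
    exact tsub_pos_of_lt (lt_of_lt_of_le hlt ht)
  have hdfin : μ (A \ BB) ≠ ∞ :=
    ne_top_of_le_ne_top hfin (measure_mono diff_subset)
  obtain ⟨C, hCm, hCsub, hC0, hCsmall⟩ :=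
    hμ.small (hA.diff hBBm) hpos hdfin (tsub_pos_of_lt hlt)
  -- C is admissible at every stage, so every chosen piece has measure ≥ μ C / 2
  have hCn : ∀ n, μ C ≤ 2 * μ (f (B n)) := by
    intro n
    refine hf4 (B n) C hCm ?_ ?_
    · exact hCsub.trans (diff_subset_diff_right (subset_iUnion B n))
    · exact hCsmall.le.trans (tsub_le_tsub_left (measure_mono (subset_iUnion B n)) t)
  -- but the chosen pieces are disjoint with total measure ≤ t < ∞
  have hgB : ∀ n, f (B n) ⊆ B (n + 1) := by
    intro n; rw [hBs n]; exact subset_union_right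
  have haux : ∀ m n, m < n → Disjoint (f (B m)) (f (B n)) := by
    intro m n hmn
    have h1 : f (B m) ⊆ B n := (hgB m).trans (hmono hmn)
    exact disjoint_sdiff_right.mono h1 (hf2 (B n))
  have hgdisj : Pairwise (Function.onFun Disjoint fun n => f (B n)) := by
    intro m n hmn
    rcases hmn.lt_or_gt with h | h
    · exact haux m n h
    · exact (haux n m h).symm
  have htsum : ∑' n, μ (f (B n)) ≤ t := by
    rw [← measure_iUnion hgdisj fun n => hf1 _]
    refine le_trans (measure_mono ?_) hBBle
    refine iUnion_subset fun n => ?_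
    exact (hgB n).trans (subset_iUnion B (n + 1))
  have hto0 : Tendsto (fun n => μ (f (B n))) atTop (𝓝 0) :=
    ENNReal.tendsto_atTop_zero_of_tsum_ne_top (lt_of_le_of_lt htsum htfin.lt_top).ne
  obtain ⟨n, hn⟩ := (hto0.eventually (gt_mem_nhds (ENNReal.half_pos hC0.ne'))).exists
  have h2 : 2 * μ (f (B n)) < 2 * (μ C / 2) := by
    rw [ENNReal.mul_lt_mul_iff_right two_ne_zero ENNReal.ofNat_ne_top]
    exact hn
  rw [ENNReal.mul_div_cancel two_ne_zero ENNReal.ofNat_ne_top] at h2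
  exact absurd (lt_of_le_of_lt (hCn n) h2) (lt_irrefl _)

/-- in an atom-free σ-finite measure space, for every measurable `A`
and every `t ∈ [0, μ A]` there is a measurable `B ⊆ A` with `μ B = t`. -/
theorem stmt1 {Ω : Type*} [MeasurableSpace Ω] (μ : Measure Ω) [SigmaFinite μ]
    (hμ : AtomFree μ) (A : Set Ω) (hA : MeasurableSet A) (t : ℝ≥0∞) (ht : t ≤ μ A) :
    ∃ B : Set Ω, MeasurableSet B ∧ B ⊆ A ∧ μ B = t := by
  rcases eq_or_lt_of_le ht with h | h
  · exact ⟨A, hA, subset_rfl, h.symm⟩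
  · have hiSup : (⨆ n, μ (A ∩ spanningSets μ n)) = μ A := by
      rw [← Directed.measure_iUnion
        ((monotone_const.inter (monotone_spanningSets μ)).directed_le)]
      rw [← inter_iUnion, iUnion_spanningSets, inter_univ]
    obtain ⟨n, hn⟩ := lt_iSup_iff.mp (hiSup ▸ h)
    obtain ⟨B, h1, h2, h3⟩ := hμ.stmt_fin (hA.inter (measurableSet_spanningSets μ n))
      (ne_of_lt (lt_of_le_of_lt (measure_mono inter_subset_right)
        (measure_spanningSets_lt_top μ n))) hn.le
    exact ⟨B, h1, h2.trans inter_subset_left, h3⟩
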